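/- Let α ≥ 2 be an integer, τ ∈ (0,1], and ν > 0. Assume that α − 1 ≤ (2/3)·ν²·ln(1/(τα(1+ν²))). Then Σ_{j=3}^{α} τ^j·C(α,j)·2·e^{j(j−1)/(2ν²)} ≤ τ²·C(α,2)·(1/ν²). -/

import Mathlib

lemma descFactorial_le_aux (a : ℕ) : ∀ k : ℕ, a.descFactorial (k+2) ≤ a*(a-1)*a^k := by
  intro k
  induction k with
  | zero => simp [Nat.descFactorial, Nat.mul_comm]
  | succ k ih =>
      rw [show k+1+2 = (k+2)+1 from rfl, Nat.descFactorial_succ]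
      calc (a - (k+2)) * a.descFactorial (k+2) ≤ a * (a*(a-1)*a^k) :=
            Nat.mul_le_mul (Nat.sub_le _ _) ih
        _ = a*(a-1)*a^(k+1) := by ring

lemma factorial_ge_aux : ∀ k : ℕ, 6 * 4^k ≤ (k+3).factorial := by
  intro k
  induction k with
  | zero => norm_num [Nat.factorial]
  | succ k ih =>
      rw [show k+1+3 = (k+3)+1 from rfl, Nat.factorial_succ]
      calc 6 * 4^(k+1) = 4 * (6 * 4^k) := by ring
        _ ≤ 4 * (k+3).factorial := Nat.mul_le_mul_left _ ih
        _ ≤ (k+3+1) * (k+3).factorial := Nat.mul_le_mul_right _ (by omega)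

set_option maxHeartbeats 1000000 in
open Finset in
/-- Tail bound in the uniform-subsampling RDP analysis:
`Σ_{j=3}^{α} τ^j·C(α,j)·2·e^{j(j−1)/(2ν²)} ≤ τ²·C(α,2)·(1/ν²)`. -/
theorem rdp_tail_sum_bound (α : ℕ) (hα : 2 ≤ α) (τ ν : ℝ)
    (hτ0 : 0 < τ) (hτ1 : τ ≤ 1) (hν0 : 0 < ν)
    (hcond : (α : ℝ) - 1 ≤ 2 / 3 * ν ^ 2 * Real.log (1 / (τ * α * (1 + ν ^ 2)))) :
    ∑ j ∈ Icc 3 α, τ ^ j * (α.choose j : ℝ) * 2 *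
        Real.exp ((j : ℝ) * ((j : ℝ) - 1) / (2 * ν ^ 2))
      ≤ τ ^ 2 * (α.choose 2 : ℝ) * (1 / ν ^ 2) := by
  have hν2 : (0:ℝ) < ν^2 := by positivity
  have hαR : (2:ℝ) ≤ (α:ℝ) := by exact_mod_cast hα
  have hα0 : (0:ℝ) < (α:ℝ) := by linarith
  obtain ⟨K, hK⟩ : ∃ K : ℝ, K = 1 + ν^2 := ⟨_, rfl⟩
  have hK0 : (0:ℝ) < K := by rw [hK]; positivity
  have hK1 : (1:ℝ) ≤ K := by rw [hK]; nlinarith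
  obtain ⟨x, hx⟩ : ∃ x : ℝ, x = τ * α * K := ⟨_, rfl⟩
  have hx0 : (0:ℝ) < x := by rw [hx]; positivity
  obtain ⟨L, hL⟩ : ∃ L : ℝ, L = Real.log (1/x) := ⟨_, rfl⟩
  rw [← hK, ← hx, ← hL] at hcond
  have hL0 : (0:ℝ) < L := by
    by_contra h
    push_neg at h
    nlinarith [hcond]
  have hx1 : x < 1 := by
    by_contra h
    push_neg at h
    have h1 : (1:ℝ)/x ≤ 1 := by
      rw [div_le_one hx0]; linarith
    have h2 := Real.log_nonpos (by positivity) h1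
    rw [← hL] at h2
    linarith
  obtain ⟨E, hE⟩ : ∃ E : ℝ, E = ((α:ℝ) - 1) / (2*ν^2) := ⟨_, rfl⟩
  obtain ⟨r, hr⟩ : ∃ r : ℝ, r = τ * α * Real.exp E := ⟨_, rfl⟩
  have hr0 : (0:ℝ) ≤ r := by rw [hr]; positivity
  -- exp E ^ 3 ≤ 1/x
  have hE3 : Real.exp E ^ 3 ≤ 1/x := by
    have h3E : 3 * E ≤ L := by
      rw [hE]
      rw [show (3:ℝ) * (((α:ℝ)-1)/(2*ν^2)) = (3*((α:ℝ)-1))/(2*ν^2) by ring]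
      rw [div_le_iff₀ (by positivity)]
      nlinarith [hcond]
    calc Real.exp E ^ 3 = Real.exp ((3:ℕ) * E) := by rw [Real.exp_nat_mul]
      _ ≤ Real.exp L := by
          apply Real.exp_le_exp.2
          push_cast
          linarith
      _ = 1/x := by rw [hL, Real.exp_log (by positivity)]
  have hr3 : r^3 ≤ x^2/K^3 := by
    have key : τ^3*(α:ℝ)^3*(1/x) = x^2/K^3 := by
      rw [hx]
      field_simp
    calc r^3 = τ^3*(α:ℝ)^3*(Real.exp E^3) := by rw [hr]; ring
      _ ≤ τ^3*(α:ℝ)^3*(1/x) := by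
          apply mul_le_mul_of_nonneg_left hE3 (by positivity)
      _ = x^2/K^3 := key
  have hr1 : r ≤ 1 := by
    have hx2 : x^2 ≤ 1 := by nlinarith
    have hK3 : (1:ℝ) ≤ K^3 := one_le_pow₀ hK1
    have h1 : r^3 ≤ 1 := by
      refine hr3.trans ?_
      rw [div_le_one (by positivity)]
      linarith
    exact (pow_le_one_iff_of_nonneg hr0 (by norm_num)).1 h1
  have hAnn : (0:ℝ) ≤ ((α:ℝ)-1)/α := div_nonneg (by linarith) (by linarith)
  -- termwise bound
  have hterm : ∀ j ∈ Icc 3 α,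
      τ ^ j * (α.choose j : ℝ) * 2 * Real.exp ((j : ℝ) * ((j : ℝ) - 1) / (2 * ν ^ 2))
        ≤ ((α:ℝ)-1)/α * (r^3/3) * (r/4)^(j-3) := by
    intro j hj
    rw [mem_Icc] at hj
    obtain ⟨hj3, hjα⟩ := hj
    obtain ⟨k, rfl⟩ := Nat.exists_eq_add_of_le hj3
    have hjR : ((3+k:ℕ):ℝ) ≤ (α:ℝ) := by exact_mod_cast hjα
    have hfpos : (0:ℝ) < ((3+k).factorial : ℝ) := by positivity
    -- choose bound
    have hchoose : (α.choose (3+k) : ℝ)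
        ≤ (α:ℝ)*((α:ℝ)-1)*(α:ℝ)^(1+k) / ((3+k).factorial : ℝ) := by
      rw [le_div_iff₀ hfpos]
      have hnat : α.choose (3+k) * (3+k).factorial ≤ α*(α-1)*α^(1+k) := by
        have h := descFactorial_le_aux α (1+k)
        rw [show (1+k)+2 = 3+k by omega] at h
        rw [Nat.mul_comm, ← Nat.descFactorial_eq_factorial_mul_choose]
        exact h
      calc (α.choose (3+k):ℝ) * ((3+k).factorial:ℝ)
          = ((α.choose (3+k) * (3+k).factorial : ℕ) : ℝ) := by push_cast; ring
        _ ≤ ((α*(α-1)*α^(1+k) : ℕ):ℝ) := Nat.cast_le.2 hnat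
        _ = (α:ℝ)*((α:ℝ)-1)*(α:ℝ)^(1+k) := by
            push_cast [Nat.cast_sub (show 1 ≤ α by omega)]
            ring
    have hBnn : (0:ℝ) ≤ (α:ℝ)*((α:ℝ)-1)*(α:ℝ)^(1+k) / ((3+k).factorial : ℝ) :=
      div_nonneg (mul_nonneg (mul_nonneg hα0.le (by linarith)) (by positivity)) hfpos.le
    -- exp bound
    have hexp : Real.exp (((3+k:ℕ) : ℝ) * (((3+k:ℕ) : ℝ) - 1) / (2 * ν ^ 2))
        ≤ Real.exp E ^ (3+k) := by
      rw [← Real.exp_nat_mul]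
      apply Real.exp_le_exp.2
      rw [hE, show ((3+k:ℕ):ℝ) * (((α:ℝ)-1)/(2*ν^2))
          = (((3+k:ℕ):ℝ) * ((α:ℝ)-1))/(2*ν^2) by ring]
      have hnum : ((3+k:ℕ):ℝ) * (((3+k:ℕ):ℝ)-1) ≤ ((3+k:ℕ):ℝ) * ((α:ℝ)-1) :=
        mul_le_mul_of_nonneg_left (by linarith) (by positivity)
      exact div_le_div_of_nonneg_right hnum (by linarith) |>.trans_eq rfl
    calc τ ^ (3+k) * (α.choose (3+k) : ℝ) * 2 *
            Real.exp (((3+k:ℕ) : ℝ) * (((3+k:ℕ) : ℝ) - 1) / (2 * ν ^ 2))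
        ≤ τ ^ (3+k) * ((α:ℝ)*((α:ℝ)-1)*(α:ℝ)^(1+k) / ((3+k).factorial : ℝ)) * 2 *
            (Real.exp E ^ (3+k)) := by
          apply mul_le_mul ?_ hexp (Real.exp_pos _).le ?_
          · exact mul_le_mul_of_nonneg_right
              (mul_le_mul_of_nonneg_left hchoose (by positivity)) (by norm_num)
          · exact mul_nonneg (mul_nonneg (by positivity) hBnn) (by norm_num)
      _ = ((α:ℝ)-1)/α * ((2 / ((3+k).factorial : ℝ)) * r^(3+k)) := by
          rw [hr]
          field_simp
          ring
      _ ≤ ((α:ℝ)-1)/α * ((r^3/3) * (r/4)^k) := by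
          apply mul_le_mul_of_nonneg_left ?_ hAnn
          have hfact : (6 * 4^k : ℝ) ≤ ((3+k).factorial : ℝ) := by
            have h := factorial_ge_aux k
            rw [show k+3 = 3+k by omega] at h
            exact_mod_cast h
          calc (2 / ((3+k).factorial : ℝ)) * r^(3+k)
              ≤ (2 / (6 * 4^k : ℝ)) * r^(3+k) := by
                apply mul_le_mul_of_nonneg_right ?_ (pow_nonneg hr0 _)
                apply div_le_div_of_nonneg_left (by norm_num) (by positivity) hfact
            _ = (r^3/3) * (r/4)^k := by
                rw [div_pow]
                field_simp
                ring
      _ = ((α:ℝ)-1)/α * (r^3/3) * (r/4)^((3+k)-3) := by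
          rw [show (3+k)-3 = k by omega]
          ring
  -- geometric sum bound
  have hgeom : ∑ j ∈ Icc 3 α, ((r/4):ℝ)^(j-3) ≤ 4/3 := by
    rw [← Finset.Ico_add_one_right_eq_Icc, Finset.sum_Ico_eq_sum_range]
    have hred : ∀ i : ℕ, (3 + i) - 3 = i := fun i => by omega
    simp only [hred]
    have hq0 : (0:ℝ) ≤ r/4 := by positivity
    have hq4 : r/4 ≤ 1/4 := by linarith
    have hqne : r/4 ≠ 1 := by intro h; rw [h] at hq4; linarith
    rw [geom_sum_eq hqne]
    rw [div_le_iff_of_neg (by linarith : r/4 - 1 < 0)]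
    have hqn : (0:ℝ) ≤ (r/4)^(α+1-3) := pow_nonneg hq0 _
    linarith
  -- assemble
  calc ∑ j ∈ Icc 3 α, τ ^ j * (α.choose j : ℝ) * 2 *
          Real.exp ((j : ℝ) * ((j : ℝ) - 1) / (2 * ν ^ 2))
      ≤ ∑ j ∈ Icc 3 α, ((α:ℝ)-1)/α * (r^3/3) * (r/4)^(j-3) := Finset.sum_le_sum hterm
    _ = ((α:ℝ)-1)/α * (r^3/3) * ∑ j ∈ Icc 3 α, ((r/4):ℝ)^(j-3) := by rw [Finset.mul_sum]
    _ ≤ ((α:ℝ)-1)/α * (r^3/3) * (4/3) := by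
        apply mul_le_mul_of_nonneg_left hgeom
        exact mul_nonneg hAnn (by positivity)
    _ ≤ ((α:ℝ)-1)/α * ((x^2/K^3)/3) * (4/3) := by
        have h9 : r^3/3 ≤ (x^2/K^3)/3 := by linarith
        exact mul_le_mul_of_nonneg_right (mul_le_mul_of_nonneg_left h9 hAnn) (by norm_num)
    _ ≤ τ ^ 2 * (α.choose 2 : ℝ) * (1 / ν ^ 2) := by
        rw [Nat.cast_choose_two]
        have hxx : x^2/K^3 = τ^2*(α:ℝ)^2/K := by
          rw [hx]
          field_simp
        have heq : ((α:ℝ)-1)/α * ((x^2/K^3)/3) * (4/3)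
            = (τ^2*(α:ℝ)*((α:ℝ)-1)) * (4/(9*K)) := by
          rw [hxx]
          field_simp
          ring
        rw [heq]
        have hfrac : (4:ℝ)/(9*K) ≤ 1/(2*ν^2) := by
          rw [div_le_div_iff₀ (by linarith) (by positivity), hK]
          nlinarith
        calc (τ^2*(α:ℝ)*((α:ℝ)-1)) * (4/(9*K))
            ≤ (τ^2*(α:ℝ)*((α:ℝ)-1)) * (1/(2*ν^2)) := by
              apply mul_le_mul_of_nonneg_left hfrac
              exact mul_nonneg (by positivity) (by linarith)
          _ = τ^2 * ((α:ℝ)*((α:ℝ)-1)/2) * (1/ν^2) := by ring
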